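/- Let (R, m) be a Cohen-Macaulay local ring of dimension one and I a regular ideal of R. Let b ∈ I be a non-zerodivisor of R, and suppose a ∈ R is such that the principal ideal (a) is a reduction of the ideal b(R:I) of R. Then J := (a/b)I (an ideal of R, since a/b ∈ R:I) is a partial trace ideal of I. -/

import Mathlib

/-- The length of an `R`-module `M`: the supremum of lengths of strictly
increasing chains of submodules of `M`, valued in `ℕ∞`. -/
noncomputable def modLength (R M : Type*) [CommRing R] [AddCommGroup M] [Module R M] : ℕ∞ :=
  ⨆ s : RelSeries {p : Submodule R M × Submodule R M | p.1 < p.2}, (s.length : ℕ∞)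

/-- `h(M) = inf { ℓ_R(R/Im f) : f ∈ Hom_R(M,R) }`. -/
noncomputable def hInv (R M : Type*) [CommRing R] [AddCommGroup M] [Module R M] : ℕ∞ :=
  ⨅ f : M →ₗ[R] R, modLength R (R ⧸ LinearMap.range f)

namespace StmtAux

open Order

section LengthCore

variable {R M N : Type*} [CommRing R] [AddCommGroup M] [Module R M]
  [AddCommGroup N] [Module R N]

lemma modLength_eq_height (R M : Type*) [CommRing R] [AddCommGroup M] [Module R M] :
    modLength R M = Order.height (⊤ : Submodule R M) := by
  apply le_antisymm
  · exact iSup_le fun s => Order.length_le_height le_top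
  · apply Order.height_le
    intro p _
    exact le_iSup (fun s : RelSeries {p : Submodule R M × Submodule R M | p.1 < p.2} =>
      (s.length : ℕ∞)) p

lemma length_le_modLength (p : LTSeries (Submodule R M)) :
    (p.length : ℕ∞) ≤ modLength R M :=
  le_iSup (fun s : RelSeries {p : Submodule R M × Submodule R M | p.1 < p.2} =>
      (s.length : ℕ∞)) p

/-- a < b implies height a + 1 ≤ height b -/
lemma height_add_one_le {α : Type*} [Preorder α] {x y : α} (h : x < y) :
    Order.height x + 1 ≤ Order.height y := by
  rw [Order.height_eq_iSup_lt_height y]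
  exact le_biSup (fun z => Order.height z + 1) h

lemma modLength_congr (e : M ≃ₗ[R] N) : modLength R M = modLength R N := by
  rw [modLength_eq_height, modLength_eq_height]
  have h := Order.height_orderIso (Submodule.orderIsoMapComap e) (⊤ : Submodule R M)
  rw [← h]
  congr 1
  show Submodule.map (e : M →ₗ[R] N) ⊤ = ⊤
  rw [Submodule.map_top, LinearMap.range_eq_top]
  exact e.surjective

lemma modLength_le_of_surjective (f : M →ₗ[R] N) (hf : Function.Surjective f) :
    modLength R N ≤ modLength R M := by
  apply iSup_le
  intro p
  have hsm : StrictMono (Submodule.comap f) := by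
    intro p q hpq
    refine lt_of_le_of_ne (Submodule.comap_mono hpq.le) ?_
    intro hEq
    have := congrArg (Submodule.map f) hEq
    rw [Submodule.map_comap_eq_self (by rw [LinearMap.range_eq_top.2 hf]; exact le_top),
      Submodule.map_comap_eq_self (by rw [LinearMap.range_eq_top.2 hf]; exact le_top)] at this
    exact hpq.ne this
  exact length_le_modLength (LTSeries.map p _ hsm)


lemma modLength_eq_coheight (R M : Type*) [CommRing R] [AddCommGroup M] [Module R M] :
    modLength R M = Order.coheight (⊥ : Submodule R M) := by
  apply le_antisymm
  · exact iSup_le fun s => Order.length_le_coheight bot_le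
  · apply Order.coheight_le
    intro p _
    exact length_le_modLength p

lemma modLength_submodule (N' : Submodule R M) :
    modLength R ↥N' = Order.height N' := by
  rw [modLength_eq_height]
  have h := Order.height_orderIso (Submodule.MapSubtype.orderIso N') (⊤ : Submodule R ↥N')
  have htop : (Submodule.MapSubtype.orderIso N') ⊤ = ⟨N', le_refl _⟩ := by
    apply Subtype.ext
    show Submodule.map N'.subtype ⊤ = N'
    rw [Submodule.map_top, Submodule.range_subtype]
  rw [htop] at h
  rw [← h]
  apply le_antisymm
  · exact Order.height_le_height_apply_of_strictMono
      (fun x : {p' : Submodule R M // p' ≤ N'} => (x : Submodule R M))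
      (fun x y hxy => hxy) _
  · apply Order.height_le
    intro p hlast
    have hle : ∀ i, p.toFun i ≤ N' := fun i => by
      have h2 := p.strictMono.monotone (Fin.le_last i)
      rw [show p.toFun (Fin.last _) = p.last from rfl, hlast] at h2
      exact h2
    let q : LTSeries {p' : Submodule R M // p' ≤ N'} :=
      ⟨p.length, fun i => ⟨p.toFun i, hle i⟩, fun i => show _ < _ from Subtype.mk_lt_mk.2 (show p.toFun _ < p.toFun _ from p.step i)⟩
    have hq : q.last = ⟨N', le_refl _⟩ := Subtype.ext hlast
    exact Order.length_le_height (le_of_eq hq)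

lemma modLength_quotient (N' : Submodule R M) :
    modLength R (M ⧸ N') = Order.coheight N' := by
  rw [modLength_eq_coheight]
  have h := Order.coheight_orderIso (Submodule.comapMkQRelIso N') (⊥ : Submodule R (M ⧸ N'))
  have hbot : (Submodule.comapMkQRelIso N') ⊥ = ⟨N', Set.mem_Ici.2 le_rfl⟩ := by
    apply Subtype.ext
    show Submodule.comap N'.mkQ ⊥ = N'
    rw [Submodule.comap_bot, Submodule.ker_mkQ]
  rw [hbot] at h
  rw [← h]
  apply le_antisymm
  · exact Order.coheight_le_coheight_apply_of_strictMono
      (fun x : Set.Ici N' => (x : Submodule R M))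
      (fun x y hxy => hxy) _
  · apply Order.coheight_le
    intro p hhead
    have hle : ∀ i, N' ≤ p.toFun i := fun i => by
      have h2 := p.strictMono.monotone (Fin.zero_le i)
      rw [show p.toFun 0 = p.head from rfl, hhead] at h2
      exact h2
    let q : LTSeries (Set.Ici N') :=
      ⟨p.length, fun i => ⟨p.toFun i, hle i⟩, fun i => show _ < _ from Subtype.mk_lt_mk.2 (show p.toFun _ < p.toFun _ from p.step i)⟩
    have hq : q.head = ⟨N', Set.mem_Ici.2 le_rfl⟩ := Subtype.ext hhead
    exact Order.length_le_coheight (le_of_eq hq.symm)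

private lemma additivity_claim (N' : Submodule R M) :
    ∀ (n : ℕ) (p : LTSeries (Submodule R M)), p.length = n →
      (n : ℕ∞) ≤ Order.height (p.last ⊓ N') +
        Order.height (Submodule.map N'.mkQ p.last : Submodule R (M ⧸ N')) := by
  intro n
  induction n with
  | zero => intro p _; simp
  | succ n ih =>
    intro p hp
    have hlt : p.eraseLast.last < p.last := p.eraseLast_last_rel_last (by omega)
    have hlen : p.eraseLast.length = n := by
      have : p.eraseLast.length = p.length - 1 := rfl
      omega
    have IH := ih p.eraseLast hlen
    by_cases hinf : p.eraseLast.last ⊓ N' = p.last ⊓ N'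
    · -- then the images in the quotient must differ
      have hmap : Submodule.map N'.mkQ p.eraseLast.last < Submodule.map N'.mkQ p.last := by
        refine lt_of_le_of_ne (Submodule.map_mono hlt.le) ?_
        intro hEq
        apply hlt.ne
        have hsup : N' ⊔ p.eraseLast.last = N' ⊔ p.last := by
          rw [← Submodule.comap_map_mkQ, ← Submodule.comap_map_mkQ, hEq]
        refine eq_of_le_of_inf_le_of_sup_le hlt.le (le_of_eq hinf.symm) ?_
        rw [sup_comm p.last N', sup_comm p.eraseLast.last N', ← hsup]
      calc ((n + 1 : ℕ) : ℕ∞) = (n : ℕ∞) + 1 := by push_cast; ring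
        _ ≤ (Order.height (p.eraseLast.last ⊓ N') +
              Order.height (Submodule.map N'.mkQ p.eraseLast.last)) + 1 := by
            exact add_le_add_left IH 1
        _ = Order.height (p.eraseLast.last ⊓ N') +
              (Order.height (Submodule.map N'.mkQ p.eraseLast.last) + 1) := by
            rw [add_assoc]
        _ ≤ Order.height (p.last ⊓ N') + Order.height (Submodule.map N'.mkQ p.last) := by
            refine add_le_add ?_ ?_
            · rw [hinf]
            · exact height_add_one_le hmap
    · have hinf' : p.eraseLast.last ⊓ N' < p.last ⊓ N' :=
        lt_of_le_of_ne (inf_le_inf_right _ hlt.le) hinf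
      calc ((n + 1 : ℕ) : ℕ∞) = (n : ℕ∞) + 1 := by push_cast; ring
        _ ≤ (Order.height (p.eraseLast.last ⊓ N') +
              Order.height (Submodule.map N'.mkQ p.eraseLast.last)) + 1 := by
            exact add_le_add_left IH 1
        _ = (Order.height (p.eraseLast.last ⊓ N') + 1) +
              Order.height (Submodule.map N'.mkQ p.eraseLast.last) := by
            rw [add_right_comm]
        _ ≤ Order.height (p.last ⊓ N') + Order.height (Submodule.map N'.mkQ p.last) := by
            refine add_le_add (height_add_one_le hinf') ?_
            exact Order.height_mono (Submodule.map_mono hlt.le)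

lemma modLength_eq_add (N' : Submodule R M) :
    modLength R M = modLength R ↥N' + modLength R (M ⧸ N') := by
  apply le_antisymm
  · rw [modLength_submodule]
    apply iSup_le
    intro p
    calc (p.length : ℕ∞)
        ≤ Order.height (p.last ⊓ N') +
            Order.height (Submodule.map N'.mkQ p.last : Submodule R (M ⧸ N')) :=
          additivity_claim N' p.length p rfl
      _ ≤ Order.height N' + Order.height (⊤ : Submodule R (M ⧸ N')) :=
          add_le_add (Order.height_mono inf_le_right) (Order.height_mono le_top)
      _ = Order.height N' + modLength R (M ⧸ N') := by rw [modLength_eq_height]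
  · rw [modLength_submodule, modLength_quotient, Order.height_eq_iSup_last_eq,
      Order.coheight_eq_iSup_head_eq]
    have h1 : ∃ p : LTSeries (Submodule R M), p.last = N' :=
      ⟨RelSeries.singleton _ N', rfl⟩
    rw [ENat.biSup_add' h1]
    apply iSup_le; intro p; apply iSup_le; intro hp
    have h2 : ∃ q : LTSeries (Submodule R M), q.head = N' :=
      ⟨RelSeries.singleton _ N', rfl⟩
    rw [ENat.add_biSup' h2]
    apply iSup_le; intro q; apply iSup_le; intro hq
    have hconn : p.last = q.head := by rw [hp, hq]
    calc (p.length : ℕ∞) + q.length = ((p.smash q hconn).length : ℕ∞) := by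
          rw [RelSeries.smash_length]; push_cast; ring
      _ ≤ modLength R M := length_le_modLength _
    
lemma modLength_eq_zero_of_subsingleton [Subsingleton M] : modLength R M = 0 := by
  apply le_antisymm _ zero_le
  apply iSup_le
  intro p
  have : p.length = 0 := by
    by_contra h
    have h1 : (0 : ℕ) < p.length := Nat.pos_of_ne_zero h
    have := p.step ⟨0, h1⟩
    exact absurd (Subsingleton.elim _ _ : p.toFun _ = p.toFun _) this.ne
  simp [this]

lemma modLength_le_one_of_isSimpleOrder [IsSimpleOrder (Submodule R M)] :
    modLength R M ≤ 1 := by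
  apply iSup_le
  intro p
  by_contra h
  have h2 : 2 ≤ p.length := by
    by_contra h'
    interval_cases hl : p.length <;> simp_all <;> omega
  have h01 : p.toFun ⟨0, by omega⟩ < p.toFun ⟨1, by omega⟩ := by
    have := (LTSeries.strictMono p) (show (⟨0, by omega⟩ : Fin (p.length+1)) < ⟨1, by omega⟩ by
      exact Fin.mk_lt_mk.2 (by omega))
    exact this
  have h12 : p.toFun ⟨1, by omega⟩ < p.toFun ⟨2, by omega⟩ := by
    have := (LTSeries.strictMono p) (show (⟨1, by omega⟩ : Fin (p.length+1)) < ⟨2, by omega⟩ by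
      exact Fin.mk_lt_mk.2 (by omega))
    exact this
  rcases IsSimpleOrder.eq_bot_or_eq_top (p.toFun ⟨1, by omega⟩) with h1 | h1
  · rw [h1] at h01; exact not_lt_bot h01
  · rw [h1] at h12; exact not_top_lt h12

lemma modLength_lt_top_of_isFiniteLength (h : IsFiniteLength R M) :
    modLength R M < ⊤ := by
  induction h with
  | of_subsingleton => rw [modLength_eq_zero_of_subsingleton]; exact WithTop.top_pos
  | @of_simple_quotient M _ _ N _ _ ih =>
    rw [modLength_eq_add N]
    have h1 : modLength R (M ⧸ N) ≤ 1 := modLength_le_one_of_isSimpleOrder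
    calc modLength R ↥N + modLength R (M ⧸ N) ≤ modLength R ↥N + 1 := add_le_add_right h1 _
      _ < ⊤ := by
          rcases (lt_top_iff_ne_top.1 ih) with h
          exact lt_top_iff_ne_top.2 (by
            intro hc
            exact h (by
              rcases ENat.add_eq_top.1 hc with h' | h'
              · exact h'
              · exact absurd h' (by simp)))

lemma exists_antitone_stab (h : modLength R M ≠ ⊤) (f : ℕ → Submodule R M)
    (hf : ∀ n, f (n + 1) ≤ f n) : ∃ n, f n = f (n + 1) := by
  by_contra hc
  push_neg at hc
  have hstrict : ∀ n, f (n + 1) < f n := fun n => lt_of_le_of_ne (hf n) (Ne.symm (hc n))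
  lift modLength R M to ℕ using h with k hk
  have : ∀ n : ℕ, (n : ℕ∞) ≤ (k : ℕ∞) := by
    intro n
    rw [hk]
    have hfun : ∀ i j : ℕ, i ≤ j → f j ≤ f i := by
      intro i j hij
      induction hij with
      | refl => exact le_refl _
      | step h ih => exact le_trans (hf _) ih
    let p : LTSeries (Submodule R M) :=
      ⟨n, fun i => f (n - i.1), by
        intro i
        have h1 : (i.1 : ℕ) < n := i.2
        have h2 : n - (i.1 + 1) + 1 = n - i.1 := by omega
        have := hstrict (n - (i.1 + 1))
        rw [h2] at this
        exact this⟩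
    exact length_le_modLength p
  have := this (k + 1)
  rw [Nat.cast_le] at this
  omega

end LengthCore

section IdealLayer

variable {R : Type*} [CommRing R]

/-- Master splitting lemma: `ℓ(R/A) = ℓ(R/C) + ℓ(R/(xR + A))` where `C = (A : x)`. -/
lemma len_split (A C : Ideal R) (x : R) (hC : ∀ y, y ∈ C ↔ x * y ∈ A) :
    modLength R (R ⧸ A) =
      modLength R (R ⧸ C) + modLength R (R ⧸ (Ideal.span {x} ⊔ A)) := by
  classical
  set T : Ideal R := Ideal.span {x} ⊔ A with hT
  have hAT : A ≤ T := le_sup_right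
  set N' : Submodule R (R ⧸ A) := Submodule.map A.mkQ T with hN'
  have e1 : ((R ⧸ A) ⧸ N') ≃ₗ[R] R ⧸ T := Submodule.quotientQuotientEquivQuotient A T hAT
  -- the submodule N' is the range of `y ↦ y • mkQ x`
  set g : R →ₗ[R] R ⧸ A := LinearMap.toSpanSingleton R (R ⧸ A) (A.mkQ x) with hg
  have hrange : LinearMap.range g = N' := by
    rw [hN', hT, Submodule.map_sup]
    have h1 : Submodule.map A.mkQ (A : Submodule R R) = ⊥ := by
      rw [eq_bot_iff]
      rintro z ⟨y, hy, rfl⟩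
      show A.mkQ y ∈ (⊥ : Submodule R (R ⧸ A))
      rw [Submodule.mem_bot, Submodule.mkQ_apply, Submodule.Quotient.mk_eq_zero]
      exact hy
    have h2 : Submodule.map A.mkQ (Ideal.span {x}) = Submodule.span R {A.mkQ x} := by
      rw [Ideal.span, Submodule.map_span]
      congr 1
      simp
    rw [h1, h2, sup_bot_eq, ← LinearMap.span_singleton_eq_range]
  have hker : LinearMap.ker g = C := by
    ext y
    rw [LinearMap.mem_ker, hg, LinearMap.toSpanSingleton_apply, hC]
    have heq : y • A.mkQ x = A.mkQ (x * y) := by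
      rw [← map_smul]
      congr 1
      rw [smul_eq_mul, mul_comm]
    rw [heq, Submodule.mkQ_apply, Submodule.Quotient.mk_eq_zero]
  have e2 : (R ⧸ C) ≃ₗ[R] ↥N' := by
    rw [← hker, ← hrange]
    exact g.quotKerEquivRange
  rw [modLength_eq_add N', modLength_congr e2.symm, modLength_congr e1]

lemma len_mono {A B : Ideal R} (h : A ≤ B) :
    modLength R (R ⧸ B) ≤ modLength R (R ⧸ A) := by
  apply modLength_le_of_surjective (Submodule.mapQ A B LinearMap.id h)
  intro z
  obtain ⟨y, rfl⟩ := B.mkQ_surjective z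
  refine ⟨A.mkQ y, ?_⟩
  show Submodule.mapQ A B LinearMap.id h (Submodule.Quotient.mk y) = Submodule.Quotient.mk y
  rw [Submodule.mapQ_apply]
  rfl

lemma len_top_eq_zero : modLength R (R ⧸ (⊤ : Ideal R)) = 0 := by
  have : Subsingleton (R ⧸ (⊤ : Ideal R)) := by
    constructor
    intro a b
    obtain ⟨y, rfl⟩ := Submodule.mkQ_surjective _ a
    obtain ⟨z, rfl⟩ := Submodule.mkQ_surjective _ b
    rw [Submodule.mkQ_apply, Submodule.mkQ_apply, Submodule.Quotient.eq]
    trivial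
  exact modLength_eq_zero_of_subsingleton

lemma len_span_pow (x : R) (hx : x ∈ nonZeroDivisors R) (m : ℕ) :
    modLength R (R ⧸ (Ideal.span {x ^ m} : Ideal R)) =
      (m : ℕ∞) * modLength R (R ⧸ (Ideal.span {x} : Ideal R)) := by
  induction m with
  | zero =>
    rw [pow_zero, Ideal.span_singleton_one, len_top_eq_zero]
    simp
  | succ m ih =>
    have hC : ∀ y, y ∈ (Ideal.span {x ^ m} : Ideal R) ↔
        x * y ∈ (Ideal.span {x ^ (m + 1)} : Ideal R) := by
      intro y
      rw [Ideal.mem_span_singleton, Ideal.mem_span_singleton]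
      constructor
      · rintro ⟨t, rfl⟩
        exact ⟨t, by ring⟩
      · rintro ⟨t, ht⟩
        refine ⟨t, ?_⟩
        have h1 : x * y = x * (x ^ m * t) := by rw [ht]; ring
        exact (mul_cancel_left_mem_nonZeroDivisors hx).1 h1
    have hsup : Ideal.span {x} ⊔ Ideal.span {x ^ (m + 1)} = Ideal.span {x} :=
      sup_eq_left.2 (Ideal.span_singleton_le_span_singleton.2 ⟨x ^ m, by ring⟩)
    rw [len_split (Ideal.span {x ^ (m + 1)}) (Ideal.span {x ^ m}) x hC, hsup, ih]
    push_cast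
    ring

variable [IsNoetherianRing R] [IsLocalRing R]

lemma prime_eq_maximal_of_mem (hdim : ringKrullDim R = 1) {x : R}
    (hx : x ∈ nonZeroDivisors R) (P : Ideal R) (hP : P.IsPrime) (hxP : x ∈ P) :
    P = IsLocalRing.maximalIdeal R := by
  by_contra hne
  have hPle : P ≤ IsLocalRing.maximalIdeal R := IsLocalRing.le_maximalIdeal hP.ne_top
  obtain ⟨p, hpmin, hpP⟩ := Ideal.exists_minimalPrimes_le (bot_le : (⊥ : Ideal R) ≤ P)
  have hpprime : p.IsPrime := hpmin.1.1
  have hxp : x ∉ p := by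
    intro hxp
    have hMin : p ∈ minimalPrimes R := hpmin
    have hnil : IsNilpotent (algebraMap R (Localization p.primeCompl) x) := by
      haveI : Ring.KrullDimLE 0 (Localization.AtPrime p) :=
        Ring.KrullDimLE.of_isLocalization p hMin (Localization.AtPrime p)
      rw [Ring.KrullDimLE.isNilpotent_iff_mem_maximalIdeal]
      have := Localization.AtPrime.comap_maximalIdeal (I := p)
      rw [← this] at hxp
      exact hxp
    obtain ⟨k, hk⟩ := hnil
    rw [← map_pow] at hk
    obtain ⟨s, hs⟩ := (IsLocalization.map_eq_zero_iff p.primeCompl _ _).1 hk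
    have hzero : (s : R) = 0 := (pow_mem hx k).2 _ hs
    exact s.2 (hzero ▸ p.zero_mem)
  have h1 : p < P := lt_of_le_of_ne hpP (by rintro rfl; exact hxp hxP)
  have h2 : P < IsLocalRing.maximalIdeal R := lt_of_le_of_ne hPle hne
  let P0 : PrimeSpectrum R := ⟨p, hpprime⟩
  let P1 : PrimeSpectrum R := ⟨P, hP⟩
  let P2 : PrimeSpectrum R := ⟨IsLocalRing.maximalIdeal R, inferInstance⟩
  have hc01 : P0 < P1 := (PrimeSpectrum.asIdeal_lt_asIdeal P0 P1).1 h1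
  have hc12 : P1 < P2 := (PrimeSpectrum.asIdeal_lt_asIdeal P1 P2).1 h2
  let c : LTSeries (PrimeSpectrum R) :=
    ⟨2, ![P0, P1, P2], by
      intro i
      fin_cases i
      · exact hc01
      · exact hc12⟩
  have hle := LTSeries.length_le_krullDim c
  have : ((2 : ℕ) : WithBot ℕ∞) ≤ ringKrullDim R := hle
  rw [hdim] at this
  norm_num at this

/-- If some power of the maximal ideal is contained in `A`, then `R⧸A` has finite length. -/
lemma len_ne_top_of_pow_le :
    ∀ A : Ideal R, (∃ k, (IsLocalRing.maximalIdeal R) ^ k ≤ A) →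
      modLength R (R ⧸ A) ≠ ⊤ := by
  have hsimple : modLength R (R ⧸ (IsLocalRing.maximalIdeal R)) ≤ 1 := by
    have : IsSimpleModule R (R ⧸ (IsLocalRing.maximalIdeal R)) := by
      rw [isSimpleModule_iff_isCoatom]
      exact Ideal.isMaximal_def.1 (IsLocalRing.maximalIdeal.isMaximal R)
    exact modLength_le_one_of_isSimpleOrder
  intro A
  induction A using IsNoetherian.induction with
  | _ A IH =>
  rintro ⟨k, hk⟩
  by_cases hA : A = ⊤
  · rw [hA, len_top_eq_zero]; simp
  · have hfind : ∃ j, (IsLocalRing.maximalIdeal R) ^ j ≤ A := ⟨k, hk⟩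
    classical
    let j := Nat.find hfind
    have hj : (IsLocalRing.maximalIdeal R) ^ j ≤ A := Nat.find_spec hfind
    have hjpos : j ≠ 0 := by
      intro h0
      apply hA
      have := hj
      rw [h0, pow_zero, Ideal.one_eq_top] at this
      exact top_le_iff.1 this
    obtain ⟨j', hjeq⟩ : ∃ j'', j = j'' + 1 := ⟨j - 1, by omega⟩
    have hjsucc : (IsLocalRing.maximalIdeal R) ^ (j' + 1) ≤ A := by rw [← hjeq]; exact hj
    have hj' : ¬ (IsLocalRing.maximalIdeal R) ^ j' ≤ A := Nat.find_min hfind (by omega)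
    obtain ⟨x', hx'mem, hx'A⟩ := SetLike.not_le_iff_exists.1 hj'
    set C : Ideal R := A.colon (Ideal.span {x'}) with hCdef
    have hCmem : ∀ y, y ∈ C ↔ x' * y ∈ A := by
      intro y
      rw [hCdef, Ideal.mem_colon_span_singleton, mul_comm]
    have hmC : IsLocalRing.maximalIdeal R ≤ C := by
      intro y hy
      rw [hCmem]
      apply hjsucc
      rw [pow_succ]
      exact Ideal.mul_mem_mul hx'mem hy
    have hCbound : modLength R (R ⧸ C) ≤ 1 :=
      le_trans (len_mono hmC) hsimple
    have hAlt : A < Ideal.span {x'} ⊔ A :=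
      lt_of_le_of_ne le_sup_right (by
        intro hEq
        apply hx'A
        rw [hEq]
        exact Ideal.mem_sup_left (Ideal.subset_span rfl))
    have hrec : modLength R (R ⧸ (Ideal.span {x'} ⊔ A)) ≠ ⊤ :=
      IH _ hAlt ⟨k, le_trans hk le_sup_right⟩
    rw [len_split A C x' hCmem]
    intro hEq
    rcases ENat.add_eq_top.1 hEq with h | h
    · rw [h] at hCbound
      exact absurd hCbound (by simp)
    · exact hrec h

lemma len_ne_top_of_regular (hdim : ringKrullDim R = 1) {A : Ideal R} {x : R}
    (hxA : x ∈ A) (hx : x ∈ nonZeroDivisors R) : modLength R (R ⧸ A) ≠ ⊤ := by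
  by_cases hA : A = ⊤
  · rw [hA, len_top_eq_zero]; simp
  · apply len_ne_top_of_pow_le
    have hrad : IsLocalRing.maximalIdeal R ≤ (Ideal.span {x}).radical := by
      rw [Ideal.radical_eq_sInf]
      apply le_sInf
      rintro P ⟨hsub, hprime⟩
      rw [prime_eq_maximal_of_mem hdim hx P hprime (hsub (Ideal.subset_span rfl))]
    obtain ⟨k, hk⟩ :=
      Ideal.exists_pow_le_of_le_radical_of_fg hrad (IsNoetherian.noetherian _)
    exact ⟨k, le_trans hk ((Ideal.span_singleton_le_iff_mem _).2 hxA)⟩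

lemma pow_le_of_len_ne_top (A : Ideal R) (hfin : modLength R (R ⧸ A) ≠ ⊤) :
    ∃ k, (IsLocalRing.maximalIdeal R) ^ k ≤ A := by
  obtain ⟨n, hn⟩ := exists_antitone_stab hfin
    (fun n => Submodule.map A.mkQ ((IsLocalRing.maximalIdeal R) ^ n : Ideal R))
    (fun n => Submodule.map_mono (Ideal.pow_le_pow_right (by omega)))
  refine ⟨n, ?_⟩
  have hsmul : Submodule.map A.mkQ ((IsLocalRing.maximalIdeal R) ^ (n + 1) : Ideal R) =
      IsLocalRing.maximalIdeal R • Submodule.map A.mkQ ((IsLocalRing.maximalIdeal R) ^ n : Ideal R) := by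
    rw [pow_succ']
    rw [show ((IsLocalRing.maximalIdeal R * (IsLocalRing.maximalIdeal R) ^ n : Ideal R) : Submodule R R) =
      IsLocalRing.maximalIdeal R • ((IsLocalRing.maximalIdeal R) ^ n : Ideal R) from rfl]
    exact Submodule.map_smul'' _ _ _
  have hbot : Submodule.map A.mkQ ((IsLocalRing.maximalIdeal R) ^ n : Ideal R) = ⊥ := by
    apply Submodule.eq_bot_of_le_smul_of_le_jacobson_bot (IsLocalRing.maximalIdeal R)
    · exact IsNoetherian.noetherian _
    · rw [← hsmul]
      exact le_of_eq hn
    · exact IsLocalRing.maximalIdeal_le_jacobson ⊥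
  intro z hz
  have : A.mkQ z ∈ Submodule.map A.mkQ ((IsLocalRing.maximalIdeal R) ^ n : Ideal R) :=
    Submodule.mem_map_of_mem hz
  rw [hbot, Submodule.mem_bot, Submodule.mkQ_apply, Submodule.Quotient.mk_eq_zero] at this
  exact this

lemma nzd_of_len_ne_top (hdepth : ∃ x ∈ IsLocalRing.maximalIdeal R, x ∈ nonZeroDivisors R)
    {c : R} (hfin : modLength R (R ⧸ (Ideal.span {c} : Ideal R)) ≠ ⊤) :
    c ∈ nonZeroDivisors R := by
  obtain ⟨x, hxm, hx⟩ := hdepth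
  obtain ⟨k, hk⟩ := pow_le_of_len_ne_top _ hfin
  have hxk : x ^ k ∈ Ideal.span {c} := hk (Ideal.pow_mem_pow hxm k)
  obtain ⟨t, ht⟩ := Ideal.mem_span_singleton'.1 hxk
  rw [mem_nonZeroDivisors_iff_right]
  intro z hz
  have hzx : z * x ^ k = 0 := by
    rw [← ht]
    calc z * (t * c) = (z * c) * t := by ring
      _ = 0 := by rw [hz, zero_mul]
  exact (pow_mem hx k).2 z hzx

lemma len_span_le (hdim : ringKrullDim R = 1)
    {a c : R} (ha : a ∈ nonZeroDivisors R) (hc : c ∈ nonZeroDivisors R)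
    {K : Ideal R} (hcK : c ∈ K) {n : ℕ}
    (heq : K ^ (n + 1) = Ideal.span {a} * K ^ n) :
    modLength R (R ⧸ (Ideal.span {a} : Ideal R)) ≤
      modLength R (R ⧸ (Ideal.span {c} : Ideal R)) := by
  have hpow : ∀ m : ℕ, K ^ (n + m) = Ideal.span {a} ^ m * K ^ n := by
    intro m
    induction m with
    | zero => simp
    | succ m ih =>
      rw [show n + (m + 1) = (n + m) + 1 by omega, pow_succ, ih, mul_assoc, ← pow_succ K n,
        heq, ← mul_assoc, mul_comm (Ideal.span {a} ^ m) (Ideal.span {a}), ← pow_succ']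
  have hmem : ∀ m : ℕ, Ideal.span {c ^ (n + m)} ≤ Ideal.span {a ^ m} := by
    intro m
    rw [Ideal.span_singleton_le_iff_mem, ← Ideal.span_singleton_pow]
    have h1 : c ^ (n + m) ∈ K ^ (n + m) := Ideal.pow_mem_pow hcK _
    rw [hpow m] at h1
    exact Ideal.mul_le_left h1
  have hfa : modLength R (R ⧸ (Ideal.span {a} : Ideal R)) ≠ ⊤ :=
    len_ne_top_of_regular hdim (Ideal.subset_span rfl) ha
  have hfc : modLength R (R ⧸ (Ideal.span {c} : Ideal R)) ≠ ⊤ :=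
    len_ne_top_of_regular hdim (Ideal.subset_span rfl) hc
  obtain ⟨ka, hka⟩ : ∃ k : ℕ, modLength R (R ⧸ (Ideal.span {a} : Ideal R)) = (k : ℕ∞) := by
    obtain ⟨k, hk⟩ := WithTop.ne_top_iff_exists.1 hfa
    exact ⟨k, hk.symm⟩
  obtain ⟨kc, hkc⟩ : ∃ k : ℕ, modLength R (R ⧸ (Ideal.span {c} : Ideal R)) = (k : ℕ∞) := by
    obtain ⟨k, hk⟩ := WithTop.ne_top_iff_exists.1 hfc
    exact ⟨k, hk.symm⟩
  have key : ∀ m : ℕ, m * ka ≤ (n + m) * kc := by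
    intro m
    have h3 := len_mono (hmem m)
    rw [len_span_pow a ha m, len_span_pow c hc (n + m), hka, hkc] at h3
    exact_mod_cast h3
  have hkakc : ka ≤ kc := by
    by_contra hlt
    push_neg at hlt
    have hcontra := key (n * kc + 1)
    have h5 : (n * kc + 1) * (kc + 1) ≤ (n * kc + 1) * ka := Nat.mul_le_mul_left _ hlt
    nlinarith [hcontra, h5]
  rw [hka, hkc]
  exact_mod_cast hkakc

omit [IsNoetherianRing R] [IsLocalRing R] in
lemma len_eq_main {I : Ideal R} {b c : R}
    (hc : ∀ y ∈ I, ∃ r, b * r = c * y) :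
    modLength R (R ⧸ (Submodule.map (LinearMap.mul R R c) (I : Submodule R R) : Ideal R)) =
      modLength R (R ⧸ (Submodule.comap (LinearMap.mul R R b)
        (Submodule.map (LinearMap.mul R R c) (I : Submodule R R)) : Ideal R)) +
      modLength R (R ⧸ (Ideal.span {b} : Ideal R)) := by
  set cI : Ideal R := Submodule.map (LinearMap.mul R R c) (I : Submodule R R) with hcI
  have hsub : cI ≤ Ideal.span {b} := by
    rintro z ⟨y, hy, rfl⟩
    obtain ⟨r, hr⟩ := hc y hy
    exact Ideal.mem_span_singleton.2 ⟨r, by simp only [LinearMap.mul_apply']; exact hr.symm⟩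
  have hC : ∀ y, y ∈ (Submodule.comap (LinearMap.mul R R b) cI : Ideal R) ↔ b * y ∈ cI := by
    intro y
    rw [Submodule.mem_comap]
    simp [LinearMap.mul_apply']
  have h := len_split cI (Submodule.comap (LinearMap.mul R R b) cI) b hC
  rw [sup_eq_left.2 hsub] at h
  exact h

omit [IsNoetherianRing R] [IsLocalRing R] in
lemma len_eq_nzd {I : Ideal R} {c : R} (hc : c ∈ nonZeroDivisors R) :
    modLength R (R ⧸ (Submodule.map (LinearMap.mul R R c) (I : Submodule R R) : Ideal R)) =
      modLength R (R ⧸ I) + modLength R (R ⧸ (Ideal.span {c} : Ideal R)) := by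
  set cI : Ideal R := Submodule.map (LinearMap.mul R R c) (I : Submodule R R) with hcI
  have hsub : cI ≤ Ideal.span {c} := by
    rintro z ⟨y, hy, rfl⟩
    exact Ideal.mem_span_singleton.2 ⟨y, by simp [LinearMap.mul_apply']⟩
  have hC : ∀ y, y ∈ I ↔ c * y ∈ cI := by
    intro y
    constructor
    · intro hy
      exact ⟨y, hy, by simp [LinearMap.mul_apply']⟩
    · rintro ⟨y', hy', hEq⟩
      simp only [LinearMap.mul_apply'] at hEq
      rw [(mul_cancel_left_mem_nonZeroDivisors hc).1 hEq] at hy'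
      exact hy'
  have h := len_split cI I c hC
  rw [sup_eq_left.2 hsub] at h
  exact h

end IdealLayer



end StmtAux

open StmtAux

/-- Let `(R, m)` be a one-dimensional Cohen-Macaulay local ring, `I` a
regular ideal, `b ∈ I` a non-zerodivisor, and `a ∈ R` such that `(a)` is a reduction of
the ideal `K = b(R:I)` of `R`.  Then `J := (a/b)I` (the ideal of all `x ∈ R` with
`bx ∈ aI`) is a partial trace ideal of `I`:  `J = Im f` for some `f : I →ₗ R` and
`ℓ_R(R/J) = h(I)`. -/
theorem stmt10 (R : Type*) [CommRing R] [IsNoetherianRing R] [IsLocalRing R]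
    (hdim : ringKrullDim R = 1)
    (hdepth : ∃ x ∈ IsLocalRing.maximalIdeal R, x ∈ nonZeroDivisors R)
    (I : Ideal R) (hreg : ∃ x ∈ I, x ∈ nonZeroDivisors R)
    (b : R) (hbI : b ∈ I) (hb : b ∈ nonZeroDivisors R)
    (a : R)
    -- `K` is the ideal `b(R:I)` of `R`:
    (K : Ideal R)
    (hK : ∀ x : R, x ∈ K ↔ ∃ α : FractionRing R,
      (∀ y ∈ I, ∃ r : R,
        algebraMap R (FractionRing R) r = α * algebraMap R (FractionRing R) y) ∧
      algebraMap R (FractionRing R) x = algebraMap R (FractionRing R) b * α)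
    -- `(a)` is a reduction of `K`:
    (haK : a ∈ K)
    (hred : ∃ n : ℕ, 0 < n ∧ K ^ (n + 1) = Ideal.span {a} * K ^ n)
    -- `J` is the ideal `(a/b)I` of `R`:
    (J : Ideal R)
    (hJ : ∀ x : R, x ∈ J ↔ ∃ y ∈ I, b * x = a * y) :
    ∃ f : ↥I →ₗ[R] R, LinearMap.range f = J ∧ modLength R (R ⧸ J) = hInv R ↥I := by
  classical
  obtain ⟨n, hn, heqred⟩ := hred
  have hinj : Function.Injective (algebraMap R (FractionRing R)) :=
    IsFractionRing.injective R (FractionRing R)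
  have hbcan : ∀ {r s : R}, b * r = b * s → r = s :=
    fun h => (mul_cancel_left_mem_nonZeroDivisors hb).1 h
  -- concrete description of K
  have hKc : ∀ x : R, x ∈ K ↔ ∀ y ∈ I, ∃ r : R, b * r = x * y := by
    intro x
    rw [hK x]
    constructor
    · rintro ⟨α, hα, hxb⟩ y hy
      obtain ⟨r, hr⟩ := hα y hy
      refine ⟨r, hinj ?_⟩
      rw [map_mul, map_mul, hr, hxb]
      ring
    · intro h
      have hbu : IsUnit (algebraMap R (FractionRing R) b) :=
        IsLocalization.map_units (FractionRing R) ⟨b, hb⟩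
      have hcan : ∀ u v : FractionRing R,
          algebraMap R (FractionRing R) b * u = algebraMap R (FractionRing R) b * v → u = v := by
        intro u v huv
        have h2 := congrArg (fun t => (↑hbu.unit⁻¹ : FractionRing R) * t) huv
        simpa only [← mul_assoc, IsUnit.val_inv_mul, one_mul] using h2
      refine ⟨↑hbu.unit⁻¹ * algebraMap R (FractionRing R) x, ?_, ?_⟩
      · intro y hy
        obtain ⟨r, hr⟩ := h y hy
        refine ⟨r, hcan _ _ ?_⟩
        rw [← map_mul, hr, map_mul]
        calc algebraMap R (FractionRing R) x * algebraMap R (FractionRing R) y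
            = (algebraMap R (FractionRing R) b * ↑hbu.unit⁻¹) *
              (algebraMap R (FractionRing R) x * algebraMap R (FractionRing R) y) := by
              rw [IsUnit.mul_val_inv, one_mul]
          _ = algebraMap R (FractionRing R) b *
              (↑hbu.unit⁻¹ * algebraMap R (FractionRing R) x * algebraMap R (FractionRing R) y) := by
              ring
      · rw [← mul_assoc, IsUnit.mul_val_inv, one_mul]
  have hmemMap : ∀ (c z : R),
      z ∈ Submodule.map (LinearMap.mul R R c) (I : Submodule R R) ↔ ∃ y ∈ I, c * y = z := by
    intro c z
    constructor
    · rintro ⟨y, hy, rfl⟩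
      exact ⟨y, hy, by simp [LinearMap.mul_apply']⟩
    · rintro ⟨y, hy, hEq⟩
      exact ⟨y, hy, by simpa [LinearMap.mul_apply'] using hEq⟩
  have hmemJc : ∀ (c x : R),
      x ∈ (Submodule.comap (LinearMap.mul R R b)
        (Submodule.map (LinearMap.mul R R c) (I : Submodule R R)) : Ideal R) ↔
      ∃ y ∈ I, c * y = b * x := by
    intro c x
    rw [Submodule.mem_comap, LinearMap.mul_apply', hmemMap]
  -- J is J_a
  have hJJa : J = (Submodule.comap (LinearMap.mul R R b)
      (Submodule.map (LinearMap.mul R R a) (I : Submodule R R)) : Ideal R) := by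
    ext x
    rw [hJ x, hmemJc]
    constructor
    · rintro ⟨y, hy, hEq⟩; exact ⟨y, hy, hEq.symm⟩
    · rintro ⟨y, hy, hEq⟩; exact ⟨y, hy, hEq.symm⟩
  -- a is a non-zerodivisor
  have hbK : b ∈ K := (hKc b).2 (fun y hy => ⟨y, rfl⟩)
  have hbpow : b ^ (n + 1) ∈ Ideal.span {a} := by
    have h1 : b ^ (n + 1) ∈ K ^ (n + 1) := Ideal.pow_mem_pow hbK _
    rw [heqred] at h1
    exact Ideal.mul_le_left h1
  have hanz : a ∈ nonZeroDivisors R := by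
    obtain ⟨t, ht⟩ := Ideal.mem_span_singleton'.1 hbpow
    rw [mem_nonZeroDivisors_iff_right]
    intro z hz
    have h2 : z * b ^ (n + 1) = 0 := by
      rw [← ht]
      calc z * (t * a) = (z * a) * t := by ring
        _ = 0 := by rw [hz, zero_mul]
    exact (pow_mem hb (n + 1)).2 z h2
  -- construct f₀
  have haI : ∀ y ∈ I, ∃ r, b * r = a * y := (hKc a).1 haK
  have hchoice : ∀ u : ↥I, ∃ r, b * r = a * (u : R) := fun u => haI u u.2
  let g : ↥I → R := fun u => Classical.choose (hchoice u)
  have hg : ∀ u : ↥I, b * g u = a * (u : R) := fun u => Classical.choose_spec (hchoice u)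
  let f₀ : ↥I →ₗ[R] R :=
    { toFun := g
      map_add' := by
        intro u v
        apply hbcan
        rw [mul_add, hg, hg, hg]
        push_cast
        ring
      map_smul' := by
        intro r u
        apply hbcan
        rw [RingHom.id_apply, smul_eq_mul, hg]
        rw [show (((r • u) : ↥I) : R) = r * (u : R) by
          rw [Submodule.coe_smul, smul_eq_mul]]
        rw [show b * (r * g u) = r * (b * g u) by ring, hg]
        ring }
  have hrange0 : LinearMap.range f₀ = J := by
    ext x
    constructor
    · rintro ⟨u, rfl⟩
      rw [hJ]
      exact ⟨u, u.2, hg u⟩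
    · intro hx
      rw [hJ x] at hx
      obtain ⟨y, hy, hEq⟩ := hx
      refine ⟨⟨y, hy⟩, ?_⟩
      apply hbcan
      show b * g ⟨y, hy⟩ = b * x
      rw [hg ⟨y, hy⟩]
      exact hEq.symm
  refine ⟨f₀, hrange0, ?_⟩
  apply le_antisymm
  · -- ℓ(R⧸J) ≤ hInv
    apply le_iInf
    intro f
    set c := f ⟨b, hbI⟩ with hcdef
    have hc1 : ∀ (y : R) (hy : y ∈ I), b * f ⟨y, hy⟩ = c * y := by
      intro y hy
      have h1 : b • (⟨y, hy⟩ : ↥I) = y • (⟨b, hbI⟩ : ↥I) :=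
        Subtype.ext (by simp [smul_eq_mul, mul_comm])
      calc b * f ⟨y, hy⟩ = f (b • ⟨y, hy⟩) := by rw [map_smul, smul_eq_mul]
        _ = f (y • ⟨b, hbI⟩) := by rw [h1]
        _ = y * c := by rw [map_smul, smul_eq_mul]
        _ = c * y := mul_comm _ _
    have hrangef : LinearMap.range f = (Submodule.comap (LinearMap.mul R R b)
        (Submodule.map (LinearMap.mul R R c) (I : Submodule R R)) : Ideal R) := by
      ext x
      rw [hmemJc]
      constructor
      · rintro ⟨⟨y, hy⟩, rfl⟩
        exact ⟨y, hy, (hc1 y hy).symm⟩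
      · rintro ⟨y, hy, hEq⟩
        refine ⟨⟨y, hy⟩, ?_⟩
        apply hbcan
        rw [hc1 y hy]
        exact hEq
    rw [hrangef, hJJa]
    by_cases hfin : modLength R (R ⧸ (Submodule.comap (LinearMap.mul R R b)
        (Submodule.map (LinearMap.mul R R c) (I : Submodule R R)) : Ideal R)) = ⊤
    · rw [hfin]; exact le_top
    · have hcK' : ∀ y ∈ I, ∃ r, b * r = c * y := fun y hy => ⟨f ⟨y, hy⟩, hc1 y hy⟩
      have heq_c := len_eq_main (I := I) (b := b) (c := c) hcK'
      have hfb : modLength R (R ⧸ (Ideal.span {b} : Ideal R)) ≠ ⊤ :=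
        len_ne_top_of_regular hdim (Ideal.subset_span rfl) hb
      have hfcI : modLength R
          (R ⧸ (Submodule.map (LinearMap.mul R R c) (I : Submodule R R) : Ideal R)) ≠ ⊤ := by
        rw [heq_c]
        exact WithTop.add_ne_top.2 ⟨hfin, hfb⟩
      have hsubc : (Submodule.map (LinearMap.mul R R c) (I : Submodule R R) : Ideal R) ≤
          Ideal.span {c} := by
        intro z hz
        obtain ⟨y, hy, hEq⟩ := (hmemMap c z).1 hz
        exact Ideal.mem_span_singleton.2 ⟨y, hEq.symm⟩
      have hfc : modLength R (R ⧸ (Ideal.span {c} : Ideal R)) ≠ ⊤ := by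
        intro hEq
        exact hfcI (top_unique (hEq ▸ len_mono hsubc))
      have hcnz : c ∈ nonZeroDivisors R := nzd_of_len_ne_top hdepth hfc
      have heq_c2 := len_eq_nzd (I := I) hcnz
      have heq_a := len_eq_main (I := I) (b := b) (c := a) haI
      have heq_a2 := len_eq_nzd (I := I) hanz
      have hcomp := len_span_le hdim hanz hcnz ((hKc c).2 hcK') heqred
      have hchain : modLength R (R ⧸ (Submodule.comap (LinearMap.mul R R b)
            (Submodule.map (LinearMap.mul R R a) (I : Submodule R R)) : Ideal R)) +
            modLength R (R ⧸ (Ideal.span {b} : Ideal R)) ≤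
          modLength R (R ⧸ (Submodule.comap (LinearMap.mul R R b)
            (Submodule.map (LinearMap.mul R R c) (I : Submodule R R)) : Ideal R)) +
            modLength R (R ⧸ (Ideal.span {b} : Ideal R)) := by
        calc _ = modLength R
              (R ⧸ (Submodule.map (LinearMap.mul R R a) (I : Submodule R R) : Ideal R)) :=
              heq_a.symm
          _ = modLength R (R ⧸ I) + modLength R (R ⧸ (Ideal.span {a} : Ideal R)) := heq_a2
          _ ≤ modLength R (R ⧸ I) + modLength R (R ⧸ (Ideal.span {c} : Ideal R)) :=
              add_le_add_right hcomp _
          _ = modLength R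
              (R ⧸ (Submodule.map (LinearMap.mul R R c) (I : Submodule R R) : Ideal R)) :=
              heq_c2.symm
          _ = _ := heq_c
      exact (WithTop.add_le_add_iff_right hfb).1 hchain
  · -- hInv ≤ ℓ(R⧸J)
    have h := iInf_le (fun f : ↥I →ₗ[R] R => modLength R (R ⧸ LinearMap.range f)) f₀
    rw [hrange0] at h
    exact h
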